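/- arXiv:1605.02125 — 3 statements merged into one kernel-verified Lean document; each statement's English description precedes it below -/
import Mathlib

section
/- For all sequences ε = (ε_k)_{k≥0} and ε' = (ε'_k)_{k≥0} of complex numbers and all x, y ∈ ℂ[F], the following free Cotlar identity holds in ℂ[F]: (H_ε x)·(H_{ε'} y)* − τ((H_ε x − ε₀·x)·(H_{ε'} y − ε'₀·y)*)·λ_e = H_ε(x·H_{ε'}^{op}(y*)) + H_{ε'}^{op}((H_ε x)·y*) − H_{ε'}^{op}(H_ε(x·y*)). -/
open scoped Classical

noncomputable section

abbrev F := FreeGroup ℕ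
abbrev A := MonoidAlgebra ℂ F

def lam (w : F) : A := MonoidAlgebra.single w 1

def tau (x : A) : ℂ := x.coeff 1

def len (w : F) : ℕ := w.toWord.length

abbrev Letter := ℕ × Bool

def firstL (w : F) : Option Letter := w.toWord.head?
def lastL (w : F) : Option Letter := w.toWord.getLast?

def invLetter (s : Letter) : Letter := (s.1, !s.2)

/-- `g` is a prefix of `w` : `|g⁻¹w| = |w| - |g|`. -/
def isPrefix (g w : F) : Prop := len g + len (g⁻¹ * w) = len w

/-- the involution `x* (w) = conj (x (w⁻¹))`. -/
def starA (x : A) : A :=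
  MonoidAlgebra.ofCoeff (Finsupp.mapDomain (fun w : F => w⁻¹)
    (Finsupp.mapRange (fun c => (starRingEnd ℂ) c) (by simp) x.coeff))

def Ls (s : Letter) (x : A) : A := MonoidAlgebra.ofCoeff (Finsupp.filter (fun w => firstL w = some s) x.coeff)
def Rs (s : Letter) (x : A) : A := MonoidAlgebra.ofCoeff (Finsupp.filter (fun w => lastL w = some s) x.coeff)

def Lk (k : ℕ) (x : A) : A := Ls (k, true) x + Ls (k, false) x
def Rk (k : ℕ) (x : A) : A := Rs (k, true) x + Rs (k, false) x

def Lh (h : F) (x : A) : A := MonoidAlgebra.ofCoeff (Finsupp.filter (fun w => isPrefix h w) x.coeff)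

def Heps (εe : ℂ) (ε : ℕ → ℂ) (x : A) : A :=
  (εe * tau x) • lam 1 + ∑ᶠ k : ℕ, ε k • Lk k x

def HepsOp (εe : ℂ) (ε : ℕ → ℂ) (x : A) : A :=
  ((starRingEnd ℂ) εe * tau x) • lam 1 + ∑ᶠ k : ℕ, ((starRingEnd ℂ) (ε k)) • Rk k x

/-- noncommutative `L^{2^m}` norm. -/
def Lnorm (m : ℕ) (x : A) : ℝ :=
  (tau ((starA x * x) ^ (2 ^ (m - 1)))).re ^ ((1 : ℝ) / (2 ^ m : ℝ))

/-- `(τ(y^{2^{m-1}}))^{1/2^m}` for positive `y`. -/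
def Qnorm (m : ℕ) (y : A) : ℝ :=
  (tau (y ^ (2 ^ (m - 1)))).re ^ ((1 : ℝ) / (2 ^ m : ℝ))

def ddag (x y : A) : A :=
  Finsupp.sum x.coeff fun g cg => Finsupp.sum y.coeff fun h ch =>
    if ¬ isPrefix g⁻¹ h then (cg * ch) • lam (g * h) else 0

def dag (x y : A) : A :=
  Finsupp.sum x.coeff fun g cg => Finsupp.sum y.coeff fun h ch =>
    if isPrefix g⁻¹ h ∧ g⁻¹ ≠ h then (cg * ch) • lam (g * h) else 0




section AuxCotlar
open FreeGroup

lemma reduced_cons_tail {a : Letter} {L : List Letter} (h : reduce (a :: L) = a :: L) :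
    reduce L = L := by
  have h1 : Red (a :: L) (a :: reduce L) := Red.cons_cons reduce.red
  have h2 : reduce (a :: L) = a :: reduce L := reduce.min (by rw [h]; exact h1)
  rw [h] at h2
  exact (List.cons.injEq a L a (reduce L) ▸ h2).2.symm

lemma mk_cons (a : Letter) (L : List Letter) :
    FreeGroup.mk (a :: L) = FreeGroup.mk [a] * FreeGroup.mk L := by
  rw [mul_mk]; rfl

lemma toWord_single_mul_nocancel (a : Letter) (p : F)
    (h : ∀ s ∈ firstL p, a ≠ invLetter s) :
    (FreeGroup.mk [a] * p).toWord = a :: p.toWord := by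
  conv_lhs => rw [← mk_toWord (x := p), ← mk_cons, toWord_mk]
  rw [reduce.cons, reduce_toWord]
  rcases hpw : p.toWord with _ | ⟨s, tl⟩
  · rfl
  · have hfs : firstL p = some s := by rw [firstL, hpw]; rfl
    have hne := h s hfs
    have : ¬ (a.1 = s.1 ∧ a.2 = !s.2) := by
      rintro ⟨h1, h2⟩
      exact hne (Prod.ext h1 h2)
    simp only [this, if_false]

lemma toWord_single_mul_cancel (a : Letter) (p : F) {s : Letter}
    (hs : firstL p = some s) (h : a = invLetter s) :
    (FreeGroup.mk [a] * p).toWord = p.toWord.tail := by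
  conv_lhs => rw [← mk_toWord (x := p), ← mk_cons, toWord_mk]
  rw [reduce.cons, reduce_toWord]
  rcases hpw : p.toWord with _ | ⟨s', tl⟩
  · rw [firstL, hpw] at hs; simp at hs
  · rw [firstL, hpw] at hs
    have hss : s' = s := by simpa using hs
    subst hss
    have : a.1 = s'.1 ∧ a.2 = !s'.2 := by rw [h]; exact ⟨rfl, rfl⟩
    simp only [this, and_self, if_true]
    rfl

lemma exists_decomp (g : F) (hg : g ≠ 1) :
    ∃ (a : Letter) (p : F), g = FreeGroup.mk [a] * p ∧ firstL g = some a ∧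
      (∀ s ∈ firstL p, a ≠ invLetter s) ∧ p.toWord.length + 1 = g.toWord.length := by
  rcases hgw : g.toWord with _ | ⟨a, L⟩
  · exact absurd (toWord_eq_nil_iff.mp hgw) hg
  have hred : reduce (a :: L) = a :: L := by rw [← hgw]; exact reduce_toWord g
  have hLred : reduce L = L := reduced_cons_tail hred
  refine ⟨a, FreeGroup.mk L, ?_, ?_, ?_, ?_⟩
  · rw [← mk_cons, ← hgw, mk_toWord]
  · rw [firstL, hgw]; rfl
  · intro s hs hcontra
    rw [firstL, toWord_mk, hLred] at hs
    rcases hLw : L with _ | ⟨s', tl⟩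
    · rw [hLw] at hs; simp at hs
    · rw [hLw] at hs
      have hss : s' = s := by simpa using hs
      subst hss
      rw [hLw] at hred hLred
      rw [reduce.cons, hLred] at hred
      have hc : a.1 = s'.1 ∧ a.2 = !s'.2 := by rw [hcontra]; exact ⟨rfl, rfl⟩
      simp only [hc, and_self, if_true] at hred
      have := congrArg List.length hred
      simp at this
      omega
  · rw [toWord_mk, hLred]; simp

lemma single_mul_last (a : Letter) (h : F) (hh : h ≠ 1) (hgh : FreeGroup.mk [a] * h ≠ 1) :
    lastL (FreeGroup.mk [a] * h) = lastL h := by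
  rcases hhw : h.toWord with _ | ⟨s, tl⟩
  · exact absurd (toWord_eq_nil_iff.mp hhw) hh
  have hfs : firstL h = some s := by rw [firstL, hhw]; rfl
  by_cases hc : a = invLetter s
  · have := toWord_single_mul_cancel a h hfs hc
    rw [lastL, lastL, this, hhw]
    rcases htl : tl with _ | ⟨t, tl'⟩
    · exfalso
      apply hgh
      apply toWord_eq_nil_iff.mp
      rw [this, hhw, htl]
      rfl
    · simp [List.getLast?_cons_cons]
  · have := toWord_single_mul_nocancel a h (by intro t ht; rw [hfs] at ht; simp at ht; rwa [ht] at hc)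
    rw [lastL, lastL, this, hhw]
    simp [List.getLast?_cons_cons]

lemma first_or_last :
    ∀ (n : ℕ) (g h : F), g.toWord.length ≤ n → g ≠ 1 → h ≠ 1 → g * h ≠ 1 →
      firstL (g * h) = firstL g ∨ lastL (g * h) = lastL h := by
  intro n
  induction n with
  | zero =>
    intro g h hlen hg _ _
    exact absurd (toWord_eq_nil_iff.mp (List.length_eq_zero_iff.mp (Nat.le_zero.mp hlen))) hg
  | succ n ih =>
    intro g h hlen hg hh hgh
    obtain ⟨a, p, hgp, hfg, hnc, hlp⟩ := exists_decomp g hg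
    by_cases hp : p = 1
    · subst hp
      rw [mul_one] at hgp
      right
      rw [hgp] at hgh ⊢
      exact single_mul_last a h hh hgh
    · set q := p * h with hq
      by_cases hq1 : q = 1
      · left
        have : g * h = FreeGroup.mk [a] := by rw [hgp, mul_assoc, ← hq, hq1, mul_one]
        rw [this, hfg, firstL, toWord_mk, reduce_singleton]; rfl
      · have hih := ih p h (by omega) hp hh hq1
        rcases hih with hf | hl
        · -- first q = first p : no cancellation between a and q
          left
          obtain ⟨s, hs⟩ : ∃ s, firstL p = some s := by
            rcases hpw : p.toWord with _ | ⟨s, tl⟩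
            · exact absurd (toWord_eq_nil_iff.mp hpw) hp
            · exact ⟨s, by rw [firstL, hpw]; rfl⟩
          have hgh' : g * h = FreeGroup.mk [a] * q := by rw [hgp, mul_assoc]
          rw [hgh', hfg]
          have : (FreeGroup.mk [a] * q).toWord = a :: q.toWord := by
            apply toWord_single_mul_nocancel
            intro t ht
            rw [hf, hs] at ht
            simp at ht
            subst ht
            exact hnc s hs
          rw [firstL, this]; rfl
        · right
          have hgh' : g * h = FreeGroup.mk [a] * q := by rw [hgp, mul_assoc]
          rw [hgh', single_mul_last a q hq1 (by rw [← hgh']; exact hgh), hl]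

lemma lastL_inv (g : F) : lastL g⁻¹ = (firstL g).map invLetter := by
  rw [lastL, toWord_inv, firstL, invRev, List.getLast?_reverse, List.head?_map]
  rfl

/-! ### Diagonal symbols -/

def Phi (εe : ℂ) (ε : ℕ → ℂ) (w : F) : ℂ :=
  match firstL w with
  | none => εe
  | some s => ε s.1

def Psi (εe : ℂ) (ε : ℕ → ℂ) (w : F) : ℂ :=
  match lastL w with
  | none => (starRingEnd ℂ) εe
  | some s => (starRingEnd ℂ) (ε s.1)

lemma firstL_one : firstL (1 : F) = none := by
  rw [firstL, FreeGroup.toWord_one]; rfl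

lemma lastL_one : lastL (1 : F) = none := by
  rw [lastL, FreeGroup.toWord_one]; rfl

lemma Phi_one (εe : ℂ) (ε : ℕ → ℂ) : Phi εe ε 1 = εe := by
  rw [Phi, firstL_one]

lemma Psi_one (εe : ℂ) (ε : ℕ → ℂ) : Psi εe ε 1 = (starRingEnd ℂ) εe := by
  rw [Psi, lastL_one]

lemma Phi_Psi_dichotomy (εe εe' : ℂ) (ε ε' : ℕ → ℂ) (g h : F) (hgh : g * h ≠ 1) :
    Phi εe ε g = Phi εe ε (g * h) ∨ Psi εe' ε' h = Psi εe' ε' (g * h) := by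
  by_cases hg : g = 1
  · right; subst hg; rw [one_mul]
  by_cases hh : h = 1
  · left; subst hh; rw [mul_one]
  rcases first_or_last (g.toWord.length) g h le_rfl hg hh hgh with hf | hl
  · left; unfold Phi; rw [hf]
  · right; unfold Psi; rw [hl]

/-! ### Basic lemmas on `tau`, `lam`, `starA` -/

lemma addA_apply (x y : A) (w : F) : (x + y).coeff w = x.coeff w + y.coeff w := rfl
lemma subA_apply (x y : A) (w : F) : (x - y).coeff w = x.coeff w - y.coeff w := rfl
lemma smulA_apply (c : ℂ) (x : A) (w : F) : (c • x).coeff w = c * x.coeff w := rfl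
lemma zeroA_apply (w : F) : (0 : A).coeff w = 0 := rfl

lemma lam_mul (g h : F) : lam g * lam h = lam (g * h) := by
  rw [lam, lam, lam, MonoidAlgebra.single_mul_single, one_mul]

lemma tau_lam (w : F) : tau (lam w) = if w = 1 then 1 else 0 := by
  rw [tau, lam, MonoidAlgebra.coeff_single]
  exact Finsupp.single_apply

lemma tau_add (x y : A) : tau (x + y) = tau x + tau y := Finsupp.add_apply _ _ _

lemma tau_sub (x y : A) : tau (x - y) = tau x - tau y := Finsupp.sub_apply _ _ _

lemma tau_smul (c : ℂ) (x : A) : tau (c • x) = c * tau x := Finsupp.smul_apply _ _ _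

lemma tau_zero : tau (0 : A) = 0 := rfl

lemma starA_apply (x : A) (w : F) : (starA x).coeff w = (starRingEnd ℂ) (x.coeff w⁻¹) := by
  rw [starA, MonoidAlgebra.coeff_ofCoeff]
  have : w = (fun v : F => v⁻¹) w⁻¹ := by simp
  rw [this, Finsupp.mapDomain_apply (fun a b hab => by simpa using hab)]
  simp

lemma starA_add (x y : A) : starA (x + y) = starA x + starA y := by
  ext w; simp [starA_apply, addA_apply, map_add]

lemma starA_smul (c : ℂ) (x : A) : starA (c • x) = (starRingEnd ℂ) c • starA x := by
  ext w; simp [starA_apply, smulA_apply, map_mul]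

lemma starA_sub (x y : A) : starA (x - y) = starA x - starA y := by
  ext w; simp [starA_apply, subA_apply, map_sub]

lemma starA_lam (w : F) : starA (lam w) = lam w⁻¹ := by
  ext v
  rw [starA_apply, lam, lam, MonoidAlgebra.coeff_single, MonoidAlgebra.coeff_single]
  rw [Finsupp.single_apply, Finsupp.single_apply]
  by_cases h : w = v⁻¹
  · rw [if_pos h, if_pos (by rw [h]; simp)]
    exact map_one (starRingEnd ℂ)
  · rw [if_neg h, if_neg (by intro hc; exact h (by rw [← hc]; simp))]
    exact map_zero (starRingEnd ℂ)

/-! ### `Lk`/`Rk` on basis vectors -/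

lemma Ls_lam (s : Letter) (w : F) :
    Ls s (lam w) = if firstL w = some s then lam w else 0 := by
  rw [Ls, lam, MonoidAlgebra.coeff_single]
  by_cases h : firstL w = some s
  · rw [if_pos h]
    exact congrArg MonoidAlgebra.ofCoeff (Finsupp.filter_single_of_pos (p := fun w => firstL w = some s) h)
  · rw [if_neg h]
    exact congrArg MonoidAlgebra.ofCoeff (Finsupp.filter_single_of_neg (p := fun w => firstL w = some s) h)

lemma Rs_lam (s : Letter) (w : F) :
    Rs s (lam w) = if lastL w = some s then lam w else 0 := by
  rw [Rs, lam, MonoidAlgebra.coeff_single]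
  by_cases h : lastL w = some s
  · rw [if_pos h]
    exact congrArg MonoidAlgebra.ofCoeff (Finsupp.filter_single_of_pos (p := fun w => lastL w = some s) h)
  · rw [if_neg h]
    exact congrArg MonoidAlgebra.ofCoeff (Finsupp.filter_single_of_neg (p := fun w => lastL w = some s) h)

lemma Lk_lam (k : ℕ) (w : F) :
    Lk k (lam w) = if (firstL w).map Prod.fst = some k then lam w else 0 := by
  rw [Lk, Ls_lam, Ls_lam]
  rcases h : firstL w with _ | ⟨k', b⟩
  · simp
  · by_cases hk : k' = k
    · subst hk
      cases b <;> simp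
    · simp [Prod.ext_iff, hk]

lemma Rk_lam (k : ℕ) (w : F) :
    Rk k (lam w) = if (lastL w).map Prod.fst = some k then lam w else 0 := by
  rw [Rk, Rs_lam, Rs_lam]
  rcases h : lastL w with _ | ⟨k', b⟩
  · simp
  · by_cases hk : k' = k
    · subst hk
      cases b <;> simp
    · simp [Prod.ext_iff, hk]

/-! ### Linearity of `Heps`, `HepsOp` -/

lemma Lk_eq_zero (k : ℕ) (x : A)
    (h : ∀ w ∈ x.coeff.support, (firstL w).map Prod.fst ≠ some k) : Lk k x = 0 := by
  ext w
  by_cases hx : x.coeff w = 0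
  · simp [Lk, Ls, Finsupp.filter_apply, addA_apply, hx]
  · have hw : w ∈ x.coeff.support := Finsupp.mem_support_iff.mpr hx
    have h1 : firstL w ≠ some (k, true) := by
      intro hc; exact h w hw (by rw [hc]; rfl)
    have h2 : firstL w ≠ some (k, false) := by
      intro hc; exact h w hw (by rw [hc]; rfl)
    simp [Lk, Ls, Finsupp.filter_apply, addA_apply, h1, h2]

lemma Rk_eq_zero (k : ℕ) (x : A)
    (h : ∀ w ∈ x.coeff.support, (lastL w).map Prod.fst ≠ some k) : Rk k x = 0 := by
  ext w
  by_cases hx : x.coeff w = 0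
  · simp [Rk, Rs, Finsupp.filter_apply, addA_apply, hx]
  · have hw : w ∈ x.coeff.support := Finsupp.mem_support_iff.mpr hx
    have h1 : lastL w ≠ some (k, true) := by
      intro hc; exact h w hw (by rw [hc]; rfl)
    have h2 : lastL w ≠ some (k, false) := by
      intro hc; exact h w hw (by rw [hc]; rfl)
    simp [Rk, Rs, Finsupp.filter_apply, addA_apply, h1, h2]

lemma L_support_finite (ε : ℕ → ℂ) (x : A) :
    (Function.support fun k => ε k • Lk k x).Finite := by
  apply Set.Finite.subset
    ((x.coeff.support.finite_toSet).image (fun w => ((firstL w).getD (0, true)).1))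
  intro k hk
  have hLk : Lk k x ≠ 0 := by
    intro hc; apply hk; simp [hc]
  obtain ⟨w, hw, hfw⟩ : ∃ w ∈ x.coeff.support, (firstL w).map Prod.fst = some k := by
    by_contra hco
    push_neg at hco
    exact hLk (Lk_eq_zero k x hco)
  refine ⟨w, hw, ?_⟩
  rcases hf : firstL w with _ | s
  · rw [hf] at hfw; simp at hfw
  · rw [hf] at hfw
    show ((firstL w).getD (0, true)).1 = k
    rw [hf]
    simp at hfw
    simp [hfw]

lemma R_support_finite (ε : ℕ → ℂ) (x : A) :
    (Function.support fun k => (starRingEnd ℂ) (ε k) • Rk k x).Finite := by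
  apply Set.Finite.subset
    ((x.coeff.support.finite_toSet).image (fun w => ((lastL w).getD (0, true)).1))
  intro k hk
  have hRk : Rk k x ≠ 0 := by
    intro hc; apply hk; simp [hc]
  obtain ⟨w, hw, hfw⟩ : ∃ w ∈ x.coeff.support, (lastL w).map Prod.fst = some k := by
    by_contra hco
    push_neg at hco
    exact hRk (Rk_eq_zero k x hco)
  refine ⟨w, hw, ?_⟩
  rcases hf : lastL w with _ | s
  · rw [hf] at hfw; simp at hfw
  · rw [hf] at hfw
    show ((lastL w).getD (0, true)).1 = k
    rw [hf]
    simp at hfw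
    simp [hfw]

lemma Lk_add (k : ℕ) (x y : A) : Lk k (x + y) = Lk k x + Lk k y := by
  rw [Lk, Lk, Lk, Ls, Ls, Ls, Ls, Ls, Ls, MonoidAlgebra.coeff_add, Finsupp.filter_add, Finsupp.filter_add,
    MonoidAlgebra.ofCoeff_add, MonoidAlgebra.ofCoeff_add]
  abel

lemma Rk_add (k : ℕ) (x y : A) : Rk k (x + y) = Rk k x + Rk k y := by
  rw [Rk, Rk, Rk, Rs, Rs, Rs, Rs, Rs, Rs, MonoidAlgebra.coeff_add, Finsupp.filter_add, Finsupp.filter_add,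
    MonoidAlgebra.ofCoeff_add, MonoidAlgebra.ofCoeff_add]
  abel

lemma Lk_smul (k : ℕ) (c : ℂ) (x : A) : Lk k (c • x) = c • Lk k x := by
  rw [Lk, Lk, Ls, Ls, Ls, Ls, MonoidAlgebra.coeff_smul, Finsupp.filter_smul, Finsupp.filter_smul,
    MonoidAlgebra.ofCoeff_smul, MonoidAlgebra.ofCoeff_smul, smul_add]

lemma Rk_smul (k : ℕ) (c : ℂ) (x : A) : Rk k (c • x) = c • Rk k x := by
  rw [Rk, Rk, Rs, Rs, Rs, Rs, MonoidAlgebra.coeff_smul, Finsupp.filter_smul, Finsupp.filter_smul,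
    MonoidAlgebra.ofCoeff_smul, MonoidAlgebra.ofCoeff_smul, smul_add]

lemma Heps_zero (εe : ℂ) (ε : ℕ → ℂ) : Heps εe ε 0 = 0 := by
  rw [Heps]
  have : ∀ k : ℕ, ε k • Lk k (0 : A) = 0 := by
    intro k; rw [Lk, Ls, Ls, MonoidAlgebra.coeff_zero, Finsupp.filter_zero, Finsupp.filter_zero,
      MonoidAlgebra.ofCoeff_zero, add_zero, smul_zero]
  rw [finsum_eq_zero_of_forall_eq_zero this, tau_zero, mul_zero, zero_smul, add_zero]

lemma HepsOp_zero (εe : ℂ) (ε : ℕ → ℂ) : HepsOp εe ε 0 = 0 := by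
  rw [HepsOp]
  have : ∀ k : ℕ, (starRingEnd ℂ) (ε k) • Rk k (0 : A) = 0 := by
    intro k; rw [Rk, Rs, Rs, MonoidAlgebra.coeff_zero, Finsupp.filter_zero, Finsupp.filter_zero,
      MonoidAlgebra.ofCoeff_zero, add_zero, smul_zero]
  rw [finsum_eq_zero_of_forall_eq_zero this, tau_zero, mul_zero, zero_smul, add_zero]

lemma Heps_add (εe : ℂ) (ε : ℕ → ℂ) (x y : A) :
    Heps εe ε (x + y) = Heps εe ε x + Heps εe ε y := by
  rw [Heps, Heps, Heps]
  have hsum : ∑ᶠ k, ε k • Lk k (x + y) = (∑ᶠ k, ε k • Lk k x) + ∑ᶠ k, ε k • Lk k y := by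
    rw [← finsum_add_distrib (L_support_finite ε x) (L_support_finite ε y)]
    apply finsum_congr
    intro k
    rw [Lk_add, smul_add]
  rw [hsum, tau_add, mul_add, add_smul]
  abel

lemma HepsOp_add (εe : ℂ) (ε : ℕ → ℂ) (x y : A) :
    HepsOp εe ε (x + y) = HepsOp εe ε x + HepsOp εe ε y := by
  rw [HepsOp, HepsOp, HepsOp]
  have hsum : ∑ᶠ k, (starRingEnd ℂ) (ε k) • Rk k (x + y)
      = (∑ᶠ k, (starRingEnd ℂ) (ε k) • Rk k x) + ∑ᶠ k, (starRingEnd ℂ) (ε k) • Rk k y := by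
    rw [← finsum_add_distrib (R_support_finite ε x) (R_support_finite ε y)]
    apply finsum_congr
    intro k
    rw [Rk_add, smul_add]
  rw [hsum, tau_add, mul_add, add_smul]
  abel

lemma Heps_smul (εe : ℂ) (ε : ℕ → ℂ) (c : ℂ) (x : A) :
    Heps εe ε (c • x) = c • Heps εe ε x := by
  rw [Heps, Heps]
  have hsum : ∑ᶠ k, ε k • Lk k (c • x) = c • ∑ᶠ k, ε k • Lk k x := by
    rw [smul_finsum' c (L_support_finite ε x)]
    apply finsum_congr
    intro k
    rw [Lk_smul, smul_comm]
  rw [hsum, tau_smul, smul_add, smul_smul]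
  ring_nf

lemma HepsOp_smul (εe : ℂ) (ε : ℕ → ℂ) (c : ℂ) (x : A) :
    HepsOp εe ε (c • x) = c • HepsOp εe ε x := by
  rw [HepsOp, HepsOp]
  have hsum : ∑ᶠ k, (starRingEnd ℂ) (ε k) • Rk k (c • x)
      = c • ∑ᶠ k, (starRingEnd ℂ) (ε k) • Rk k x := by
    rw [smul_finsum' c (R_support_finite ε x)]
    apply finsum_congr
    intro k
    rw [Rk_smul, smul_comm]
  rw [hsum, tau_smul, smul_add, smul_smul]
  ring_nf

/-! ### `Heps` and `HepsOp` on basis vectors -/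

lemma Heps_lam (εe : ℂ) (ε : ℕ → ℂ) (w : F) :
    Heps εe ε (lam w) = Phi εe ε w • lam w := by
  by_cases hw : w = 1
  · subst hw
    have h0 : ∀ k : ℕ, ε k • Lk k (lam 1) = 0 := by
      intro k
      rw [Lk_lam, firstL_one]
      simp
    rw [Heps, finsum_eq_zero_of_forall_eq_zero h0, add_zero, tau_lam, if_pos rfl,
      mul_one, Phi_one]
  · obtain ⟨s, hs⟩ : ∃ s, firstL w = some s := by
      rcases hf : firstL w with _ | s
      · exact absurd (FreeGroup.toWord_eq_nil_iff.mp (List.head?_eq_none_iff.mp hf)) hw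
      · exact ⟨s, rfl⟩
    have h0 : ∀ k : ℕ, k ≠ s.1 → ε k • Lk k (lam w) = 0 := by
      intro k hk
      rw [Lk_lam, hs, if_neg (by simpa using (Ne.symm hk)), smul_zero]
    rw [Heps, finsum_eq_single _ s.1 h0, Lk_lam, hs, Option.map_some, if_pos rfl, tau_lam,
      if_neg hw, mul_zero, zero_smul, zero_add]
    unfold Phi
    rw [hs]

lemma HepsOp_lam (εe : ℂ) (ε : ℕ → ℂ) (w : F) :
    HepsOp εe ε (lam w) = Psi εe ε w • lam w := by
  by_cases hw : w = 1
  · subst hw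
    have h0 : ∀ k : ℕ, (starRingEnd ℂ) (ε k) • Rk k (lam 1) = 0 := by
      intro k
      rw [Rk_lam, lastL_one]
      simp
    rw [HepsOp, finsum_eq_zero_of_forall_eq_zero h0, add_zero, tau_lam, if_pos rfl,
      mul_one, Psi_one]
  · obtain ⟨s, hs⟩ : ∃ s, lastL w = some s := by
      rcases hf : lastL w with _ | s
      · exact absurd (FreeGroup.toWord_eq_nil_iff.mp (List.getLast?_eq_none_iff.mp hf)) hw
      · exact ⟨s, rfl⟩
    have h0 : ∀ k : ℕ, k ≠ s.1 → (starRingEnd ℂ) (ε k) • Rk k (lam w) = 0 := by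
      intro k hk
      rw [Rk_lam, hs, if_neg (by simpa using (Ne.symm hk)), smul_zero]
    rw [HepsOp, finsum_eq_single _ s.1 h0, Rk_lam, hs, Option.map_some, if_pos rfl, tau_lam,
      if_neg hw, mul_zero, zero_smul, zero_add]
    unfold Psi
    rw [hs]

/-! ### star intertwines `Heps` and `HepsOp` -/

lemma conj_Phi (εe : ℂ) (ε : ℕ → ℂ) (g : F) :
    (starRingEnd ℂ) (Phi εe ε g) = Psi εe ε g⁻¹ := by
  unfold Phi Psi
  rw [lastL_inv]
  rcases hf : firstL g with _ | s <;> rfl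

lemma single_eq_smul_lam (g : F) (c : ℂ) :
    (MonoidAlgebra.single g c : A) = c • lam g := by
  rw [lam, MonoidAlgebra.smul_single', mul_one]

lemma A_induction (p : A → Prop) (h0 : p 0)
    (hadd : ∀ f g : A, p f → p g → p (f + g))
    (hsingle : ∀ (w : F) (c : ℂ), p (c • lam w)) : ∀ x : A, p x := by
  intro x
  refine MonoidAlgebra.induction_linear x h0 (fun f g hf hg => hadd f g hf hg) (fun w c => ?_)
  have h := hsingle w c
  rwa [single_eq_smul_lam]

lemma starA_zero : starA (0 : A) = 0 := by
  ext w; simp [starA_apply, zeroA_apply]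

lemma star_Heps (εe : ℂ) (ε : ℕ → ℂ) (y : A) :
    starA (Heps εe ε y) = HepsOp εe ε (starA y) := by
  induction y using A_induction with
  | h0 =>
    rw [Heps_zero, starA_zero, HepsOp_zero]
  | hadd f g hf hg =>
    rw [Heps_add, starA_add, starA_add, hf, hg, HepsOp_add]
  | hsingle g c =>
    rw [Heps_smul, Heps_lam, starA_smul, starA_smul, starA_smul,
      starA_lam, HepsOp_smul, HepsOp_lam, conj_Phi]

/-! ### The key bilinear identity -/

lemma eps_sub_add (εe : ℂ) (ε : ℕ → ℂ) (f g : A) :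
    Heps εe ε (f + g) - εe • (f + g)
      = (Heps εe ε f - εe • f) + (Heps εe ε g - εe • g) := by
  rw [Heps_add, smul_add]; abel

lemma epsOp_sub_add (εe' : ℂ) (ε' : ℕ → ℂ) (f g : A) :
    HepsOp εe' ε' (f + g) - (starRingEnd ℂ) εe' • (f + g)
      = (HepsOp εe' ε' f - (starRingEnd ℂ) εe' • f)
        + (HepsOp εe' ε' g - (starRingEnd ℂ) εe' • g) := by
  rw [HepsOp_add, smul_add]; abel

lemma key (εe εe' : ℂ) (ε ε' : ℕ → ℂ) (x z : A) :
    Heps εe ε x * HepsOp εe' ε' z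
      - (tau ((Heps εe ε x - εe • x) * (HepsOp εe' ε' z - (starRingEnd ℂ) εe' • z))) • lam 1
    = Heps εe ε (x * HepsOp εe' ε' z) + HepsOp εe' ε' (Heps εe ε x * z)
      - HepsOp εe' ε' (Heps εe ε (x * z)) := by
  induction x using A_induction with
  | h0 =>
    simp [Heps_zero, HepsOp_zero, tau_zero]
  | hadd f g hf hg =>
    rw [eps_sub_add]
    simp only [Heps_add, HepsOp_add, add_mul, tau_add, add_smul]
    rw [← sub_add_sub_comm, hf, hg]
    abel
  | hsingle g c =>
    induction z using A_induction with
    | h0 =>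
      simp [Heps_zero, HepsOp_zero, tau_zero]
    | hadd z1 z2 h1 h2 =>
      rw [epsOp_sub_add]
      simp only [HepsOp_add, Heps_add, mul_add, tau_add, add_smul]
      rw [← sub_add_sub_comm, h1, h2]
      abel
    | hsingle h d =>
      have Hg : Heps εe ε (c • lam g) = (c * Phi εe ε g) • lam g := by
        rw [Heps_smul, Heps_lam, smul_smul]
      have Hh : HepsOp εe' ε' (d • lam h) = (d * Psi εe' ε' h) • lam h := by
        rw [HepsOp_smul, HepsOp_lam, smul_smul]
      have T1 : Heps εe ε (c • lam g) * HepsOp εe' ε' (d • lam h)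
          = ((c * Phi εe ε g) * (d * Psi εe' ε' h)) • lam (g * h) := by
        rw [Hg, Hh, smul_mul_assoc, mul_smul_comm, lam_mul, smul_smul]
      have T2 : tau ((Heps εe ε (c • lam g) - εe • (c • lam g))
            * (HepsOp εe' ε' (d • lam h) - (starRingEnd ℂ) εe' • (d • lam h)))
          = ((c * Phi εe ε g - εe * c) * (d * Psi εe' ε' h - (starRingEnd ℂ) εe' * d))
            * (if g * h = 1 then 1 else 0) := by
        rw [Hg, Hh, smul_smul, smul_smul, ← sub_smul, ← sub_smul, smul_mul_assoc,
          mul_smul_comm, lam_mul, smul_smul, tau_smul, tau_lam]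
      have T3 : Heps εe ε ((c • lam g) * HepsOp εe' ε' (d • lam h))
          = ((c * (d * Psi εe' ε' h)) * Phi εe ε (g * h)) • lam (g * h) := by
        rw [Hh, smul_mul_assoc, mul_smul_comm, lam_mul, smul_smul,
          Heps_smul, Heps_lam, smul_smul]
      have T4 : HepsOp εe' ε' (Heps εe ε (c • lam g) * (d • lam h))
          = (((c * Phi εe ε g) * d) * Psi εe' ε' (g * h)) • lam (g * h) := by
        rw [Hg, smul_mul_assoc, mul_smul_comm, lam_mul, smul_smul,
          HepsOp_smul, HepsOp_lam, smul_smul]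
      have T5 : HepsOp εe' ε' (Heps εe ε ((c • lam g) * (d • lam h)))
          = (((c * d) * Phi εe ε (g * h)) * Psi εe' ε' (g * h)) • lam (g * h) := by
        rw [smul_mul_assoc, mul_smul_comm, lam_mul, smul_smul, Heps_smul, Heps_lam,
          smul_smul, HepsOp_smul, HepsOp_lam, smul_smul]
      rw [T1, T2, T3, T4, T5]
      by_cases hgh : g * h = 1
      · rw [if_pos hgh, hgh, Phi_one, Psi_one, mul_one]
        rw [← sub_smul, ← add_smul, ← sub_smul]
        congr 1
        ring
      · rw [if_neg hgh, mul_zero, zero_smul, sub_zero]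
        rw [← add_smul, ← sub_smul]
        congr 1
        rcases Phi_Psi_dichotomy εe εe' ε ε' g h hgh with hd | hd
        · rw [← hd]; ring
        · rw [← hd]; ring

end AuxCotlar

/-- the free Cotlar identity. -/
theorem free_cotlar_identity (εe εe' : ℂ) (ε ε' : ℕ → ℂ) (x y : A) :
    Heps εe ε x * starA (Heps εe' ε' y)
      - (tau ((Heps εe ε x - εe • x) * starA (Heps εe' ε' y - εe' • y))) • lam 1
    = Heps εe ε (x * HepsOp εe' ε' (starA y))
      + HepsOp εe' ε' (Heps εe ε x * starA y)
      - HepsOp εe' ε' (Heps εe ε (x * starA y)) := by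
  have h1 : starA (Heps εe' ε' y) = HepsOp εe' ε' (starA y) := star_Heps εe' ε' y
  have h2 : starA (Heps εe' ε' y - εe' • y)
      = HepsOp εe' ε' (starA y) - (starRingEnd ℂ) εe' • starA y := by
    rw [starA_sub, starA_smul, h1]
  rw [h1, h2]
  exact key εe εe' ε ε' x (starA y)
end
end

section
/- For all x, y ∈ ℂ[F]: (a) x·y = x ‡ y + x † y + τ(x·y)·λ_e; (b) for any family (ε_s) of complex numbers indexed by the letters s, setting H_ε := Σ_s ε_s L_s and H_ε^{op} := Σ_s conj(ε_s) R_s, one has H_ε(x ‡ y) = (H_ε x) ‡ y and x † (H_ε^{op} y) = H_ε^{op}(x † y). -/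
open scoped Classical

noncomputable section

def HepsS (ε : Letter → ℂ) (x : A) : A := ∑ᶠ s : Letter, ε s • Ls s x

def HepsSop (ε : Letter → ℂ) (x : A) : A := ∑ᶠ s : Letter, ((starRingEnd ℂ) (ε s)) • Rs s x

def RedW (L : List Letter) : Prop := List.IsChain (fun a b => ¬(a.1 = b.1 ∧ a.2 = !b.2)) L

lemma red1 {L : List Letter} (h : RedW L) : FreeGroup.reduce L = L := by
  induction L with
  | nil => rfl
  | cons x L ih =>
    rw [FreeGroup.reduce.cons, ih h.tail]
    cases L with
    | nil => rfl
    | cons hd tl =>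
      have := (List.isChain_cons_cons.mp h).1
      simp only [if_neg this]

lemma red2 (L : List Letter) : RedW (FreeGroup.reduce L) := by
  induction L with
  | nil => exact List.isChain_nil
  | cons x L ih =>
    rw [FreeGroup.reduce.cons]
    rcases hr : FreeGroup.reduce L with _ | ⟨hd, tl⟩
    · exact List.isChain_singleton x
    · rw [hr] at ih
      by_cases hc : x.1 = hd.1 ∧ x.2 = !hd.2
      · simp only [if_pos hc]; exact ih.tail
      · simp only [if_neg hc]; exact List.isChain_cons_cons.mpr ⟨hc, ih⟩

lemma redW_toWord (g : F) : RedW g.toWord := by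
  rw [← FreeGroup.reduce_toWord]; exact red2 _

lemma cancel (u : List Letter) : ∀ v : List Letter, RedW u → RedW v →
    ∃ w u' v', u = u' ++ w ∧ v = FreeGroup.invRev w ++ v' ∧
      FreeGroup.reduce (u ++ v) = u' ++ v' := by
  induction u using List.reverseRecOn with
  | nil =>
    intro v _ hv
    exact ⟨[], [], v, by simp, by simp [FreeGroup.invRev], by simpa using red1 hv⟩
  | append_singleton u₀ a ih =>
    intro v hu hv
    cases v with
    | nil =>
      refine ⟨[], u₀ ++ [a], [], by simp, by simp [FreeGroup.invRev], ?_⟩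
      simpa using red1 hu
    | cons b v₀ =>
      by_cases hc : a.1 = b.1 ∧ a.2 = !b.2
      · have hb : b = (a.1, !a.2) := by
          obtain ⟨h1, h2⟩ := hc
          cases a; cases b; simp_all
        have hstep : FreeGroup.Red.Step ((u₀ ++ [a]) ++ b :: v₀) (u₀ ++ v₀) := by
          subst hb
          have := @FreeGroup.Red.Step.not ℕ u₀ v₀ a.1 a.2
          simpa using this
        have hru : RedW u₀ := hu.prefix ⟨[a], rfl⟩
        have hrv : RedW v₀ := hv.tail
        obtain ⟨w₀, u', v', h1, h2, h3⟩ := ih v₀ hru hrv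
        refine ⟨w₀ ++ [a], u', v', ?_, ?_, ?_⟩
        · rw [h1, List.append_assoc]
        · subst hb; rw [h2]; simp [FreeGroup.invRev]
        · rw [FreeGroup.reduce.Step.eq hstep]; exact h3
      · refine ⟨[], u₀ ++ [a], b :: v₀, by simp, by simp [FreeGroup.invRev], ?_⟩
        apply red1
        apply List.IsChain.append hu hv
        intro p hp q hq
        rw [List.getLast?_concat] at hp
        simp only [List.head?_cons, Option.mem_some_iff] at hp hq
        subst hp; subst hq; exact hc

lemma key_s2 (g h : F) : ∃ w u' v' : List Letter,
    g.toWord = u' ++ w ∧ h.toWord = FreeGroup.invRev w ++ v' ∧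
    (g * h).toWord = u' ++ v' := by
  obtain ⟨w, u', v', h1, h2, h3⟩ := cancel g.toWord h.toWord (redW_toWord g) (redW_toWord h)
  refine ⟨w, u', v', h1, h2, ?_⟩
  have : g * h = FreeGroup.mk (g.toWord ++ h.toWord) := by
    rw [← FreeGroup.mul_mk, FreeGroup.mk_toWord, FreeGroup.mk_toWord]
  rw [this, FreeGroup.toWord_mk, h3]

lemma len_inv (g : F) : len g⁻¹ = len g := by
  simp [len, FreeGroup.toWord_inv, FreeGroup.invRev_length]

lemma prefix_iff {g h : F} {w u' v' : List Letter}
    (h1 : g.toWord = u' ++ w) (h2 : h.toWord = FreeGroup.invRev w ++ v')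
    (h3 : (g * h).toWord = u' ++ v') :
    isPrefix g⁻¹ h ↔ u' = [] := by
  have e1 : len g = u'.length + w.length := by rw [len, h1, List.length_append]
  have e2 : len h = w.length + v'.length := by
    rw [len, h2, List.length_append, FreeGroup.invRev_length]
  have e3 : len (g * h) = u'.length + v'.length := by rw [len, h3, List.length_append]
  unfold isPrefix
  rw [len_inv, inv_inv, e1, e2, e3, ← List.length_eq_zero_iff]
  omega

lemma isPrefix_of_eq {g h : F} (he : g⁻¹ = h) : isPrefix g⁻¹ h := by
  subst he; unfold isPrefix; simp [len]

lemma lemA {g h : F} (hp : ¬ isPrefix g⁻¹ h) : firstL (g * h) = firstL g := by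
  obtain ⟨w, u', v', h1, h2, h3⟩ := key_s2 g h
  have hu' : u' ≠ [] := fun he => hp ((prefix_iff h1 h2 h3).mpr he)
  obtain ⟨c, u'', rfl⟩ := List.exists_cons_of_ne_nil hu'
  rw [firstL, firstL, h1, h3]; rfl

lemma lemB {g h : F} (hp : isPrefix g⁻¹ h) (hne : g⁻¹ ≠ h) : lastL (g * h) = lastL h := by
  obtain ⟨w, u', v', h1, h2, h3⟩ := key_s2 g h
  have hu' : u' = [] := (prefix_iff h1 h2 h3).mp hp
  subst hu'
  have hv' : v' ≠ [] := by
    intro he; subst he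
    apply hne
    apply FreeGroup.toWord_injective
    rw [FreeGroup.toWord_inv, h1, h2]
    simp
  rcases List.eq_nil_or_concat v' with rfl | ⟨v'', c, rfl⟩
  · exact absurd rfl hv'
  · rw [lastL, lastL, h2, h3, List.concat_eq_append, List.nil_append,
      List.getLast?_concat, ← List.append_assoc, List.getLast?_concat]

lemma not_prefix_ne_one {g h : F} (hp : ¬ isPrefix g⁻¹ h) : g * h ≠ 1 := by
  intro he
  exact hp (isPrefix_of_eq (by rw [eq_inv_of_mul_eq_one_left he]; simp))

lemma prefix_ne_one {g h : F} (hp : isPrefix g⁻¹ h) (hne : g⁻¹ ≠ h) : g * h ≠ 1 := by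
  intro he; exact hne (by rw [eq_inv_of_mul_eq_one_left he]; simp)

section AlgebraLemmas

lemma Finsupp.sum_zero {α M N : Type*} [Zero M] [AddCommMonoid N] {f : α →₀ M} :
    (f.sum fun _ _ => (0 : N)) = 0 := Finset.sum_const_zero

/-- sum over a filtered finsupp. -/
lemma sum_filter' (p : F → Prop) [DecidablePred p] (f : F →₀ ℂ) (G : F → ℂ → A) :
    (Finsupp.filter p f).sum G = f.sum fun a b => if p a then G a b else 0 := by
  rw [Finsupp.sum, Finsupp.sum, Finsupp.support_filter, Finset.sum_filter]
  apply Finset.sum_congr rfl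
  intro a _
  by_cases hpa : p a
  · rw [if_pos hpa, if_pos hpa, Finsupp.filter_apply, if_pos hpa]
  · rw [if_neg hpa, if_neg hpa]

lemma filter_sum (p : F → Prop) [DecidablePred p] (f : F →₀ ℂ) (G : F → ℂ → A) :
    MonoidAlgebra.ofCoeff (Finsupp.filter p (f.sum G).coeff) =
      f.sum fun a b => MonoidAlgebra.ofCoeff (Finsupp.filter p (G a b).coeff) := by
  rw [MonoidAlgebra.coeff_finsuppSum, Finsupp.sum, Finsupp.sum, Finsupp.filter_sum,
    MonoidAlgebra.ofCoeff_sum]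

lemma sum_smul_comm (f : F →₀ ℂ) (G : F → ℂ → ℂ) (v : A) :
    (f.sum G) • v = f.sum fun a b => (G a b) • v := by
  rw [Finsupp.sum, Finsupp.sum, Finset.sum_smul]

lemma ddag_inner_zero (g : F) (y : A) :
    (y.coeff.sum fun h ch => if ¬ isPrefix g⁻¹ h then ((0:ℂ) * ch) • lam (g * h) else 0) = 0 := by
  conv_rhs => rw [← Finsupp.sum_zero (f := y.coeff)]
  apply Finsupp.sum_congr
  intro h _
  split <;> simp

/-- `ddag · y` as an additive monoid hom. -/
def ddagHom (y : A) : A →+ A where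
  toFun x := ddag x y
  map_zero' := by
    show ddag 0 y = 0
    unfold ddag; rw [MonoidAlgebra.coeff_zero]; exact Finsupp.sum_zero_index
  map_add' x₁ x₂ := by
    show ddag (x₁ + x₂) y = ddag x₁ y + ddag x₂ y
    unfold ddag
    rw [MonoidAlgebra.coeff_add]
    apply Finsupp.sum_add_index'
    · intro g; exact ddag_inner_zero g y
    · intro g b₁ b₂
      rw [← Finsupp.sum_add]
      apply Finsupp.sum_congr
      intro h _
      split
      · rw [add_mul, add_smul]
      · rw [add_zero]

lemma ddag_smul (c : ℂ) (x y : A) : ddag (c • x) y = c • ddag x y := by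
  unfold ddag
  rw [MonoidAlgebra.coeff_smul, Finsupp.sum_smul_index'
      (h := fun g cg => y.coeff.sum fun h ch =>
        if ¬ isPrefix g⁻¹ h then (cg * ch) • lam (g * h) else 0)
      (fun g => ddag_inner_zero g y),
    Finsupp.smul_sum]
  apply Finsupp.sum_congr
  intro g _
  rw [Finsupp.smul_sum]
  apply Finsupp.sum_congr
  intro h _
  split
  · rw [smul_smul, smul_eq_mul, mul_assoc]
  · rw [smul_zero]

/-- `dag x ·` as an additive monoid hom. -/
def dagHom (x : A) : A →+ A where
  toFun y := dag x y
  map_zero' := by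
    show dag x 0 = 0
    unfold dag
    conv_rhs => rw [← Finsupp.sum_zero (f := x.coeff)]
    apply Finsupp.sum_congr
    intro g _
    rw [MonoidAlgebra.coeff_zero]
    exact Finsupp.sum_zero_index
  map_add' y₁ y₂ := by
    show dag x (y₁ + y₂) = dag x y₁ + dag x y₂
    unfold dag
    rw [← Finsupp.sum_add]
    apply Finsupp.sum_congr
    intro g _
    rw [MonoidAlgebra.coeff_add]
    apply Finsupp.sum_add_index'
    · intro h; split <;> simp
    · intro h b₁ b₂
      split
      · rw [mul_add, add_smul]
      · rw [add_zero]

lemma dag_smul (c : ℂ) (x y : A) : dag x (c • y) = c • dag x y := by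
  unfold dag
  rw [Finsupp.smul_sum]
  apply Finsupp.sum_congr
  intro g _
  rw [MonoidAlgebra.coeff_smul, Finsupp.sum_smul_index'
      (h := fun h ch =>
        if isPrefix g⁻¹ h ∧ g⁻¹ ≠ h then (x.coeff g * ch) • lam (g * h) else 0)
      (by intro h; simp),
    Finsupp.smul_sum]
  apply Finsupp.sum_congr
  intro h _
  split
  · rw [smul_smul, smul_eq_mul, mul_left_comm]
  · rw [smul_zero]

lemma smul_lam_eq (c : ℂ) (w : F) : c • lam w = MonoidAlgebra.single w c := by
  rw [lam, MonoidAlgebra.smul_single', mul_one]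

/-- the key intertwining identity for `Ls`. -/
lemma Ls_ddag (s : Letter) (x y : A) : Ls s (ddag x y) = ddag (Ls s x) y := by
  unfold Ls ddag
  rw [MonoidAlgebra.coeff_ofCoeff, sum_filter', filter_sum]
  apply Finsupp.sum_congr
  intro g _
  by_cases hfg : firstL g = some s
  · rw [if_pos hfg, filter_sum]
    apply Finsupp.sum_congr
    intro h _
    by_cases hP : isPrefix g⁻¹ h
    · rw [if_neg (not_not.mpr hP), MonoidAlgebra.coeff_zero, Finsupp.filter_zero,
        MonoidAlgebra.ofCoeff_zero]
    · rw [if_pos hP, smul_lam_eq, MonoidAlgebra.coeff_single, Finsupp.filter_single_of_pos,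
        MonoidAlgebra.ofCoeff_single]
      rw [lemA hP]; exact hfg
  · rw [if_neg hfg, filter_sum]
    conv_rhs => rw [← Finsupp.sum_zero (f := y.coeff)]
    apply Finsupp.sum_congr
    intro h _
    by_cases hP : isPrefix g⁻¹ h
    · rw [if_neg (not_not.mpr hP), MonoidAlgebra.coeff_zero, Finsupp.filter_zero,
        MonoidAlgebra.ofCoeff_zero]
    · rw [if_pos hP, smul_lam_eq, MonoidAlgebra.coeff_single, Finsupp.filter_single_of_neg,
        MonoidAlgebra.ofCoeff_zero]
      rw [lemA hP]; exact hfg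

/-- the key intertwining identity for `Rs`. -/
lemma Rs_dag (s : Letter) (x y : A) : Rs s (dag x y) = dag x (Rs s y) := by
  unfold Rs dag
  rw [filter_sum]
  apply Finsupp.sum_congr
  intro g _
  rw [MonoidAlgebra.coeff_ofCoeff, sum_filter', filter_sum]
  apply Finsupp.sum_congr
  intro h _
  by_cases hP : isPrefix g⁻¹ h ∧ g⁻¹ ≠ h
  · rw [if_pos hP]
    by_cases hfh : lastL h = some s
    · rw [if_pos hfh, smul_lam_eq, MonoidAlgebra.coeff_single, Finsupp.filter_single_of_pos,
        MonoidAlgebra.ofCoeff_single]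
      rw [lemB hP.1 hP.2]; exact hfh
    · rw [if_neg hfh, smul_lam_eq, MonoidAlgebra.coeff_single, Finsupp.filter_single_of_neg,
        MonoidAlgebra.ofCoeff_zero]
      rw [lemB hP.1 hP.2]; exact hfh
  · rw [if_neg hP, MonoidAlgebra.coeff_zero, Finsupp.filter_zero, MonoidAlgebra.ofCoeff_zero]
    split <;> rfl

def FSfirst (z : A) : Finset Letter := z.coeff.support.biUnion fun w => (firstL w).toFinset
def FSlast (z : A) : Finset Letter := z.coeff.support.biUnion fun w => (lastL w).toFinset

lemma supp_Ls (ε : Letter → ℂ) (z : A) :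
    (Function.support fun s => ε s • Ls s z) ⊆ ↑(FSfirst z) := by
  intro s hs
  rw [Function.mem_support] at hs
  have hz : Ls s z ≠ 0 := by intro h0; apply hs; simp [h0]
  obtain ⟨w, hw⟩ : ∃ w, (Ls s z).coeff w ≠ 0 := by
    by_contra hcon
    push_neg at hcon
    exact hz (MonoidAlgebra.ext (Finsupp.ext fun w => hcon w))
  rw [Ls, MonoidAlgebra.coeff_ofCoeff, Finsupp.filter_apply] at hw
  by_cases hfw : firstL w = some s
  · simp only [Finset.coe_biUnion, FSfirst, Set.mem_iUnion]
    refine ⟨w, ?_, ?_⟩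
    · rw [if_pos hfw] at hw
      exact Finsupp.mem_support_iff.mpr hw
    · simp only [Finset.mem_coe, Option.mem_toFinset, hfw]; rfl
  · rw [if_neg hfw] at hw; exact absurd rfl hw

lemma supp_Rs (ε : Letter → ℂ) (z : A) :
    (Function.support fun s => ε s • Rs s z) ⊆ ↑(FSlast z) := by
  intro s hs
  rw [Function.mem_support] at hs
  have hz : Rs s z ≠ 0 := by intro h0; apply hs; simp [h0]
  obtain ⟨w, hw⟩ : ∃ w, (Rs s z).coeff w ≠ 0 := by
    by_contra hcon
    push_neg at hcon
    exact hz (MonoidAlgebra.ext (Finsupp.ext fun w => hcon w))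
  rw [Rs, MonoidAlgebra.coeff_ofCoeff, Finsupp.filter_apply] at hw
  by_cases hfw : lastL w = some s
  · simp only [Finset.coe_biUnion, FSlast, Set.mem_iUnion]
    refine ⟨w, ?_, ?_⟩
    · rw [if_pos hfw] at hw
      exact Finsupp.mem_support_iff.mpr hw
    · simp only [Finset.mem_coe, Option.mem_toFinset, hfw]; rfl
  · rw [if_neg hfw] at hw; exact absurd rfl hw

end AlgebraLemmas

/-- paraproduct decomposition and intertwining with the free Hilbert
transforms. -/
theorem paraproduct_properties (x y : A) :
    (x * y = ddag x y + dag x y + tau (x * y) • lam 1) ∧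
    (∀ ε : Letter → ℂ,
      HepsS ε (ddag x y) = ddag (HepsS ε x) y ∧
      dag x (HepsSop ε y) = HepsSop ε (dag x y)) := by
  constructor
  · -- part (a)
    have hτ : tau (x * y) • lam 1 =
        x.coeff.sum fun g cg => y.coeff.sum fun h ch =>
          if g * h = 1 then (cg * ch) • lam 1 else 0 := by
      rw [tau, MonoidAlgebra.mul_apply, sum_smul_comm]
      apply Finsupp.sum_congr
      intro g _
      rw [sum_smul_comm]
      apply Finsupp.sum_congr
      intro h _
      split <;> simp
    rw [hτ, MonoidAlgebra.mul_def]
    unfold ddag dag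
    rw [← Finsupp.sum_add, ← Finsupp.sum_add]
    apply Finsupp.sum_congr
    intro g _
    rw [← Finsupp.sum_add, ← Finsupp.sum_add]
    apply Finsupp.sum_congr
    intro h _
    by_cases h2 : g⁻¹ = h
    · have h1 : isPrefix g⁻¹ h := isPrefix_of_eq h2
      have hgh : g * h = 1 := by rw [← h2, mul_inv_cancel]
      rw [if_neg (not_not.mpr h1), if_neg (fun hc => hc.2 h2), if_pos hgh, hgh]
      simp [smul_lam_eq]
    · by_cases h1 : isPrefix g⁻¹ h
      · rw [if_neg (not_not.mpr h1), if_pos ⟨h1, h2⟩, if_neg (prefix_ne_one h1 h2)]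
        rw [smul_lam_eq, zero_add, add_zero]
      · rw [if_pos h1, if_neg (fun hc => h1 hc.1), if_neg (not_prefix_ne_one h1)]
        rw [smul_lam_eq, add_zero, add_zero]
  · -- part (b)
    intro ε
    constructor
    · -- HepsS part
      set T : Finset Letter := FSfirst x ∪ FSfirst (ddag x y) with hT
      have hsup1 : (Function.support fun s => ε s • Ls s x) ⊆ ↑T :=
        (supp_Ls ε x).trans (Finset.coe_subset.mpr Finset.subset_union_left)
      have hsup2 : (Function.support fun s => ε s • Ls s (ddag x y)) ⊆ ↑T :=
        (supp_Ls ε (ddag x y)).trans (Finset.coe_subset.mpr Finset.subset_union_right)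
      calc HepsS ε (ddag x y) = ∑ s ∈ T, ε s • Ls s (ddag x y) :=
            finsum_eq_sum_of_support_subset _ hsup2
        _ = ∑ s ∈ T, ddag (ε s • Ls s x) y := by
            apply Finset.sum_congr rfl
            intro s _
            rw [Ls_ddag, ← ddag_smul]
        _ = ddagHom y (∑ s ∈ T, ε s • Ls s x) := (map_sum (ddagHom y) _ T).symm
        _ = ddag (HepsS ε x) y := by
            show ddagHom y _ = ddagHom y _
            rw [HepsS, finsum_eq_sum_of_support_subset _ hsup1]
    · -- HepsSop part
      set T : Finset Letter := FSlast y ∪ FSlast (dag x y) with hT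
      set ε' : Letter → ℂ := fun s => (starRingEnd ℂ) (ε s) with hε'
      have hsup1 : (Function.support fun s => ε' s • Rs s y) ⊆ ↑T :=
        (supp_Rs ε' y).trans (Finset.coe_subset.mpr Finset.subset_union_left)
      have hsup2 : (Function.support fun s => ε' s • Rs s (dag x y)) ⊆ ↑T :=
        (supp_Rs ε' (dag x y)).trans (Finset.coe_subset.mpr Finset.subset_union_right)
      calc dag x (HepsSop ε y) = dagHom x (∑ s ∈ T, ε' s • Rs s y) := by
            show dagHom x _ = dagHom x _
            rw [HepsSop, finsum_eq_sum_of_support_subset _ hsup1]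
        _ = ∑ s ∈ T, dag x (ε' s • Rs s y) := map_sum (dagHom x) _ T
        _ = ∑ s ∈ T, ε' s • Rs s (dag x y) := by
            apply Finset.sum_congr rfl
            intro s _
            rw [dag_smul, Rs_dag]
        _ = HepsSop ε (dag x y) := (finsum_eq_sum_of_support_subset _ hsup2).symm
end
end

section
/- On the Hilbert space ℓ²(F), let λ_g (g ∈ F) denote the left translation unitary δ_w ↦ δ_{gw}, and for h ∈ F∖{e} let R_h denote the orthogonal projection onto the closed span of {δ_w : |w·h⁻¹| = |w| − |h|} (the words ending with h). Then for every g ∈ F and every h ∈ F∖{e}, the commutator λ_g ∘ R_h − R_h ∘ λ_g is a finite-rank operator; indeed it vanishes on every basis vector δ_w with |w| ≥ |g| + |h|. -/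
open scoped Classical

noncomputable section

/-- `ℓ²(F)`. -/
abbrev H2 := lp (fun _ : F => ℂ) 2

/-- the basis vector `δ_w` of `ℓ²(F)`. -/
def delta (w : F) : H2 := lp.single 2 w (1 : ℂ)

section Aux
open FreeGroup List


abbrev W := List (ℕ × Bool)

def NCRel (a b : ℕ × Bool) : Prop := ¬(a.1 = b.1 ∧ a.2 = !b.2)

lemma reduce_eq_self_iff_chain (L : W) : FreeGroup.reduce L = L ↔ List.Chain' NCRel L := by
  induction L with
  | nil => simp; exact List.isChain_nil
  | cons a L ih =>
    rw [FreeGroup.reduce.cons]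
    constructor
    · intro hL
      rcases hr : FreeGroup.reduce L with _ | ⟨b, t⟩
      · rw [hr] at hL
        have hL2 : [a] = a :: L := hL
        have : L = [] := by simpa using hL2.symm
        simp [this]; exact List.isChain_singleton a
      · rw [hr] at hL
        have hL2 : (if a.1 = b.1 ∧ a.2 = !b.2 then t else a :: b :: t) = a :: L := hL
        by_cases hc : a.1 = b.1 ∧ a.2 = !b.2
        · rw [if_pos hc] at hL2
          exfalso
          have h1 : (FreeGroup.reduce L).length = L.length + 2 := by
            rw [hr]; simp [hL2]
          have h2 := FreeGroup.Red.length_le (FreeGroup.reduce.red (L := L))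
          omega
        · rw [if_neg hc] at hL2
          have hL' : L = b :: t := (List.cons_injective.eq_iff.mp hL2).symm
          have : FreeGroup.reduce L = L := by rw [hr, hL']
          rw [show List.Chain' NCRel (a :: L) = List.IsChain NCRel (a :: L) from rfl, List.isChain_cons]
          refine ⟨?_, ih.mp this⟩
          intro y hy
          rw [hL'] at hy
          simp at hy
          subst hy
          exact hc
    · intro hch
      have hL : FreeGroup.reduce L = L := ih.mpr hch.tail
      rw [hL]
      cases L with
      | nil => rfl
      | cons b t =>
        have : NCRel a b := (List.isChain_cons_cons.mp hch).1
        simp only []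
        rw [if_neg this]

lemma invRev_append' (L1 L2 : W) : invRev (L1 ++ L2) = invRev L2 ++ invRev L1 := by
  simp [invRev]

lemma cancel_s15 : ∀ L₁ L₂ : W, Chain' NCRel L₁ → Chain' NCRel L₂ →
    ∃ P C Q : W, L₁ = P ++ C ∧ L₂ = invRev C ++ Q ∧
      FreeGroup.reduce (L₁ ++ L₂) = P ++ Q ∧ Chain' NCRel (P ++ Q) := by
  intro L₁
  induction L₁ using List.reverseRecOn with
  | nil =>
    intro L₂ _ h₂
    exact ⟨[], [], L₂, by simp, by simp [invRev], by simpa using (reduce_eq_self_iff_chain L₂).mpr h₂, by simpa using h₂⟩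
  | append_singleton M x ih =>
    intro L₂ h₁ h₂
    cases L₂ with
    | nil =>
      refine ⟨M ++ [x], [], [], by simp, by simp [invRev], ?_, by simpa using h₁⟩
      simpa using (reduce_eq_self_iff_chain (M ++ [x])).mpr h₁
    | cons y T =>
      by_cases hxy : y = (x.1, !x.2)
      · have hM : Chain' NCRel M := h₁.prefix ⟨[x], rfl⟩
        have hT : Chain' NCRel T := h₂.tail
        obtain ⟨P, C', Q, e1, e2, e3, e4⟩ := ih T hM hT
        have hstep : FreeGroup.Red.Step ((M ++ [x]) ++ y :: T) (M ++ T) := by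
          have : (M ++ [x]) ++ y :: T = M ++ (x.1, x.2) :: (x.1, !x.2) :: T := by
            simp [hxy]
          rw [this]
          exact FreeGroup.Red.Step.not
        refine ⟨P, C' ++ [x], Q, ?_, ?_, ?_, e4⟩
        · rw [e1]; simp
        · rw [invRev_append', e2, hxy]
          simp [invRev]
        · rw [FreeGroup.reduce.Step.eq hstep, e3]
      · have hrel : NCRel x y := by
          rintro ⟨h1, h2⟩
          exact hxy (by ext <;> simp [← h1, h2])
        have hch : Chain' NCRel ((M ++ [x]) ++ y :: T) := by
          refine h₁.append h₂ ?_
          intro a ha b hb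
          simp at ha hb
          subst ha; subst hb
          exact hrel
        exact ⟨M ++ [x], [], y :: T, by simp, by simp [invRev],
          (reduce_eq_self_iff_chain _).mpr hch, hch⟩


lemma chain_toWord (x : F) : Chain' NCRel x.toWord :=
  (reduce_eq_self_iff_chain _).mp (FreeGroup.reduce_toWord x)

lemma toWord_mul' (x y : F) : (x*y).toWord = FreeGroup.reduce (x.toWord ++ y.toWord) := by
  conv_lhs => rw [← FreeGroup.mk_toWord (x := x), ← FreeGroup.mk_toWord (x := y)]
  rw [FreeGroup.mul_mk, FreeGroup.toWord_mk]

lemma cancelF (x y : F) : ∃ P C Q : W, x.toWord = P ++ C ∧ y.toWord = invRev C ++ Q ∧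
    (x*y).toWord = P ++ Q ∧ Chain' NCRel (P ++ Q) := by
  obtain ⟨P, C, Q, e1, e2, e3, e4⟩ := cancel_s15 x.toWord y.toWord (chain_toWord x) (chain_toWord y)
  exact ⟨P, C, Q, e1, e2, by rw [toWord_mul', e3], e4⟩

lemma len_mk_chain {L : W} (hL : Chain' NCRel L) : (FreeGroup.mk L).toWord = L := by
  rw [FreeGroup.toWord_mk, (reduce_eq_self_iff_chain L).mpr hL]

lemma suffix_iff (w h : F) :
    len (w * h⁻¹) + len h = len w ↔ h.toWord <:+ w.toWord := by
  constructor
  · intro hlen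
    obtain ⟨P, C, Q, e1, e2, e3, e4⟩ := cancelF (w * h⁻¹) h
    have hw : (w * h⁻¹ * h).toWord = P ++ Q := e3
    rw [inv_mul_cancel_right] at hw
    have l1 : len (w * h⁻¹) = P.length + C.length := by simp [len, e1]
    have l2 : len h = C.length + Q.length := by simp [len, e2]
    have l3 : len w = P.length + Q.length := by simp [len, hw]
    have hC : C.length = 0 := by omega
    have hC0 : C = [] := List.length_eq_zero_iff.mp hC
    rw [hC0] at e2
    simp [invRev] at e2
    rw [hw, e2]
    exact ⟨P, rfl⟩
  · rintro ⟨U, hU⟩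
    have hUch : Chain' NCRel U := (hU ▸ chain_toWord w).prefix ⟨h.toWord, rfl⟩
    have hw : w = FreeGroup.mk U * h := by
      conv_lhs => rw [← FreeGroup.mk_toWord (x := w)]
      rw [← hU, ← FreeGroup.mul_mk, FreeGroup.mk_toWord]
    have hwh : w * h⁻¹ = FreeGroup.mk U := by rw [hw, mul_inv_cancel_right]
    have : len (w * h⁻¹) = U.length := by rw [hwh, len, len_mk_chain hUch]
    rw [this]
    simp [len, ← hU]

lemma suffix_of_append_le {h A B : W} (hs : h <:+ A ++ B) (hl : h.length ≤ B.length) :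
    h <:+ B := by
  obtain ⟨X, hX⟩ := hs
  have hXl : X.length = A.length + B.length - h.length := by
    have := congrArg List.length hX
    simp at this
    omega
  have : B.drop (B.length - h.length) = h := by
    have h2 := congrArg (List.drop (A.length + (B.length - h.length))) hX
    rw [List.drop_length_add_append] at h2
    have hidx : A.length + (B.length - h.length) = X.length := by omega
    rw [hidx, List.drop_left] at h2
    exact h2.symm
  exact this ▸ List.drop_suffix _ _

lemma key_iff (g h w : F) (hlen : len g + len h ≤ len w) :
    (h.toWord <:+ w.toWord) ↔ (h.toWord <:+ (g * w).toWord) := by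
  obtain ⟨P, C, Q, e1, e2, e3, _⟩ := cancelF g w
  have hQ : len h ≤ Q.length := by
    have l1 : len g = P.length + C.length := by simp [len, e1]
    have l2 : len w = C.length + Q.length := by simp [len, e2]
    omega
  constructor
  · intro hs
    rw [e3]
    exact (suffix_of_append_le (e2 ▸ hs) hQ).trans (List.suffix_append _ _)
  · intro hs
    rw [e2]
    exact (suffix_of_append_le (e3 ▸ hs) hQ).trans (List.suffix_append _ _)

lemma caseA (g h w : F) (h1 : h.toWord <:+ w.toWord) (h2 : ¬ h.toWord <:+ (g * w).toWord) :
    ∃ j k : ℕ, j ≤ len g ∧ k ≤ len g ∧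
      w = FreeGroup.mk ((invRev (g.toWord.drop j)).take k) * h := by
  obtain ⟨P, C, Q, e1, e2, e3, _⟩ := cancelF g w
  have hQ : Q.length < h.toWord.length := by
    by_contra hc
    push_neg at hc
    exact h2 (e3 ▸ ((suffix_of_append_le (e2 ▸ h1) hc).trans (List.suffix_append _ _)))
  obtain ⟨U, hU⟩ := h1
  have hUl : U.length < C.length := by
    have := congrArg List.length hU
    rw [e2] at this
    simp at this
    omega
  have hUC : U = (invRev C).take U.length := by
    have h3 := congrArg (List.take U.length) hU
    rw [List.take_left, e2, List.take_append_of_le_length (by simp; omega)] at h3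
    exact h3
  have hCg : C = g.toWord.drop P.length := by rw [e1, List.drop_left]
  refine ⟨P.length, U.length, ?_, ?_, ?_⟩
  · simp [len, e1]
  · have : C.length ≤ len g := by simp [len, e1]
    omega
  · rw [← hCg, ← hUC]
    conv_lhs => rw [← FreeGroup.mk_toWord (x := w), ← hU, ← FreeGroup.mul_mk]
    rw [FreeGroup.mk_toWord]

def Bset (g h : F) : Set F :=
  (fun jk : ℕ × ℕ => FreeGroup.mk ((invRev (g.toWord.drop jk.1)).take jk.2) * h) ''
    (Set.Iic (len g) ×ˢ Set.Iic (len g))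

lemma Bset_finite (g h : F) : (Bset g h).Finite :=
  ((Set.finite_Iic _).prod (Set.finite_Iic _)).image _

lemma bad_subset (g h : F) :
    {w : F | ¬ ((h.toWord <:+ w.toWord) ↔ (h.toWord <:+ (g * w).toWord))} ⊆
      Bset g h ∪ (fun v => g⁻¹ * v) '' Bset g⁻¹ h := by
  intro w hw
  simp only [Set.mem_setOf_eq, iff_iff_implies_and_implies, not_and_or] at hw
  rcases hw with hw | hw
  · push_neg at hw
    obtain ⟨j, k, hj, hk, hwe⟩ := caseA g h w hw.1 hw.2
    exact Or.inl ⟨(j, k), ⟨hj, hk⟩, hwe.symm⟩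
  · push_neg at hw
    have h2' : ¬ h.toWord <:+ (g⁻¹ * (g * w)).toWord := by
      rw [inv_mul_cancel_left]; exact hw.2
    obtain ⟨j, k, hj, hk, hwe⟩ := caseA g⁻¹ h (g * w) hw.1 h2'
    refine Or.inr ⟨g * w, ⟨(j, k), ⟨hj, hk⟩, hwe.symm⟩, by simp⟩


lemma mem_closure_span_delta (f : H2) :
    f ∈ closure ((Submodule.span ℂ (Set.range delta) : Submodule ℂ H2) : Set H2) := by
  have hs := lp.hasSum_single (E := fun _ : F => ℂ) (p := 2) (by norm_num) f
  refine mem_closure_of_tendsto hs (Filter.Eventually.of_forall ?_)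
  intro s
  refine Submodule.sum_mem _ fun i _ => ?_
  have h1 : lp.single 2 i (f i) = (f i) • delta i := by
    rw [delta, ← lp.single_smul, smul_eq_mul, mul_one]
  rw [h1]
  exact Submodule.smul_mem _ _ (Submodule.subset_span (Set.mem_range_self i))


end Aux

open FreeGroup List in
/-- the commutator of a left translation `λ_g` with the suffix projection
`R_h` vanishes on every `δ_w` with `|w| ≥ |g| + |h|`, and is a finite rank operator. -/
theorem commutator_translation_suffix_finite_rank (g h : F) (hh : h ≠ 1)
    (Tg Rh : H2 →L[ℂ] H2)
    (hTg : ∀ w : F, Tg (delta w) = delta (g * w))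
    (hRh : ∀ w : F, Rh (delta w) =
      if len (w * h⁻¹) + len h = len w then delta w else 0) :
    (∀ w : F, len g + len h ≤ len w → (Tg ∘L Rh - Rh ∘L Tg) (delta w) = 0) ∧
    FiniteDimensional ℂ
      (LinearMap.range ((Tg ∘L Rh - Rh ∘L Tg : H2 →L[ℂ] H2) : H2 →ₗ[ℂ] H2)) := by
  
  set T : H2 →L[ℂ] H2 := Tg ∘L Rh - Rh ∘L Tg with hTdef
  have hT : ∀ w : F, T (delta w) =
      (if len (w * h⁻¹) + len h = len w then delta (g * w) else 0) -
      (if len ((g * w) * h⁻¹) + len h = len (g * w) then delta (g * w) else 0) := by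
    intro w
    have : T (delta w) = Tg (Rh (delta w)) - Rh (Tg (delta w)) := rfl
    rw [this, hRh w, hTg w, hRh (g * w)]
    split_ifs with hc <;> simp [hTg w, map_zero]
  have hzero : ∀ w : F,
      ((h.toWord <:+ w.toWord) ↔ (h.toWord <:+ (g * w).toWord)) → T (delta w) = 0 := by
    intro w hiff
    rw [hT w]
    have : (len (w * h⁻¹) + len h = len w) ↔
        (len ((g * w) * h⁻¹) + len h = len (g * w)) := by
      rw [suffix_iff, suffix_iff]; exact hiff
    rw [if_congr this rfl rfl, sub_self]
  constructor
  · intro w hlen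
    exact hzero w (key_iff g h w hlen)
  · set Bad : Set F := Bset g h ∪ (fun v => g⁻¹ * v) '' Bset g⁻¹ h with hBad
    have hBadfin : Bad.Finite :=
      (Bset_finite g h).union ((Bset_finite g⁻¹ h).image _)
    set V : Submodule ℂ H2 := Submodule.span ℂ ((fun w => delta (g * w)) '' Bad) with hV
    have hVfd : FiniteDimensional ℂ V :=
      FiniteDimensional.span_of_finite ℂ (hBadfin.image _)
    have hVclosed : IsClosed (V : Set H2) := Submodule.closed_of_finiteDimensional V
    have hmem : ∀ w : F, T (delta w) ∈ V := by
      intro w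
      by_cases hb : (h.toWord <:+ w.toWord) ↔ (h.toWord <:+ (g * w).toWord)
      · rw [hzero w hb]; exact V.zero_mem
      · have hwB : w ∈ Bad := bad_subset g h hb
        have hδ : delta (g * w) ∈ V :=
          Submodule.subset_span (Set.mem_image_of_mem _ hwB)
        rw [hT w]
        split_ifs
        · simpa using V.zero_mem
        · simpa using hδ
        · simpa using V.neg_mem hδ
        · simpa using V.zero_mem
    have hrange : LinearMap.range ((T : H2 →L[ℂ] H2) : H2 →ₗ[ℂ] H2) ≤ V := by
      rintro x ⟨y, rfl⟩
      have hy := mem_closure_span_delta y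
      have hsub : ((Submodule.span ℂ (Set.range delta) : Submodule ℂ H2) : Set H2) ⊆
          (T : H2 → H2) ⁻¹' (V : Set H2) := by
        intro z hz
        have : z ∈ Submodule.comap ((T : H2 →L[ℂ] H2) : H2 →ₗ[ℂ] H2) V := by
          refine Submodule.span_le.mpr ?_ hz
          rintro _ ⟨w, rfl⟩
          exact hmem w
        exact this
      have hcl : closure ((Submodule.span ℂ (Set.range delta) : Submodule ℂ H2) : Set H2) ⊆
          (T : H2 → H2) ⁻¹' (V : Set H2) :=
        closure_minimal hsub (hVclosed.preimage T.continuous)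
      exact hcl hy
    exact Submodule.finiteDimensional_of_le hrange
end
end
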